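/- For every integer d ≥ 1 there exist constants C(d), c(d) > 0 such that the following holds. Let G be a group and let A ⊆ G be a nonempty finite d-NIP set with k-tripling. Then there exist sets E, F ⊆ A^{±3} with |E|, |F| ≤ C(d)·k^{c(d)} such that A^{±2} ⊆ EA ∩ AF. In particular, (A^{±1})² is covered by at most C(d)·k^{c(d)} left translates of A^{±1}, so A^{±1} is an m-approximate group for some m ≤ C(d)·k^{c(d)}. -/

import Mathlib

open Pointwise

/-- A subset `A` of a group `G` is `d`-NIP if there are no `x₁,…,x_d ∈ G` and
`(g_S)_{S ⊆ [d]}` in `G` with `g_S · xᵢ ∈ A ↔ i ∈ S`. -/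
def IsNIPSet {G : Type*} [Group G] (A : Set G) (d : ℕ) : Prop :=
  ¬ ∃ (x : Fin d → G) (g : Finset (Fin d) → G),
      ∀ (S : Finset (Fin d)) (i : Fin d), g S * x i ∈ A ↔ i ∈ S

/-- `A^{±n} = (A ∪ A⁻¹)^n ∪ {1}`. -/
def pmPow {G : Type*} [Group G] (A : Set G) (n : ℕ) : Set G :=
  (A ∪ A⁻¹) ^ n ∪ {1}

/-- `B` is an `m`-approximate group: `B` is symmetric (`1 ∈ B`, `B = B⁻¹`) and `B²` is
covered by `m` left translates of `B`. -/
def IsApproximateGroup {G : Type*} [Group G] (B : Set G) (m : ℕ) : Prop :=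
  1 ∈ B ∧ B⁻¹ = B ∧ ∃ T : Finset G, T.card ≤ m ∧ B * B ⊆ (T : Set G) * B

section AuxNet
open Finset


def blk (m b β : ℕ) : Finset (Fin m) := univ.filter (fun i => β*b ≤ i.val ∧ i.val < β*b + b)

lemma blk_card {m r b β : ℕ} (hm : m = r * b) (hβ : β < r) (hb : 1 ≤ b) :
    #(blk m b β) = b := by
  have hm0 : 0 < m := by
    rw [hm]; exact Nat.mul_pos (by omega) (by omega)
  have hub : β*b + b ≤ m := by
    rw [hm]
    calc β*b + b = (β+1)*b := by ring
      _ ≤ r*b := Nat.mul_le_mul_right _ (by omega)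
  have key : #(blk m b β) = #(range b) := by
    apply Finset.card_nbij' (i := fun i : Fin m => i.val - β*b)
      (j := fun j => ⟨(β*b + j) % m, Nat.mod_lt _ hm0⟩)
    · intro i hi
      simp only [blk, mem_coe, mem_filter, mem_univ, true_and] at hi
      simp only [mem_coe, mem_range]
      omega
    · intro j hj
      simp only [mem_coe, mem_range] at hj
      simp only [blk, mem_coe, mem_filter, mem_univ, true_and]
      rw [Nat.mod_eq_of_lt (by omega)]
      omega
    · intro i hi
      simp only [mem_coe, blk, mem_filter, mem_univ, true_and] at hi
      apply Fin.ext
      simp only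
      rw [Nat.mod_eq_of_lt (by omega)]
      omega
    · intro j hj
      simp only [mem_coe, mem_range] at hj
      simp only
      rw [Nat.mod_eq_of_lt (by omega)]
      omega
  rwa [card_range] at key

lemma filter_coord_card {m : ℕ} {β : Type*} [DecidableEq β] [Fintype β] (I : Finset (Fin m))
    (P : Fin m → Finset β) :
    #(univ.filter fun v : Fin m → β => ∀ i ∈ I, v i ∈ P i)
      = (∏ i ∈ I, #(P i)) * (Fintype.card β) ^ (m - #I) := by
  have h : (univ.filter fun v : Fin m → β => ∀ i ∈ I, v i ∈ P i)
      = Fintype.piFinset (fun i => if i ∈ I then P i else univ) := by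
    ext v
    simp only [mem_filter, mem_univ, true_and, Fintype.mem_piFinset]
    constructor
    · intro hv i
      by_cases hi : i ∈ I <;> simp [hi, hv]
    · intro hv i hi
      have := hv i
      simpa [hi] using this
  rw [h, Fintype.card_piFinset]
  rw [← Finset.prod_filter_mul_prod_filter_not univ (· ∈ I)]
  congr 1
  · rw [Finset.filter_mem_eq_inter, Finset.univ_inter]
    exact Finset.prod_congr rfl fun i hi => by simp [hi]
  · rw [Finset.prod_congr rfl (fun i hi => by simp at hi; simp [hi] : ∀ i ∈ univ.filter (¬ · ∈ I), _ = Fintype.card β)]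
    rw [Finset.prod_const]
    congr 1
    have := Finset.card_filter_add_card_filter_not (s := (univ : Finset (Fin m))) (· ∈ I)
    rw [Finset.filter_mem_eq_inter, Finset.univ_inter] at this
    simp only [Finset.card_univ, Fintype.card_fin] at this
    omega


lemma blk_inj {m b β β' : ℕ} {i : Fin m} (h : i ∈ blk m b β) (h' : i ∈ blk m b β') : β = β' := by
  simp only [blk, mem_filter, mem_univ, true_and] at h h'
  by_contra hne
  rcases Nat.lt_or_ge β β' with hlt | hge
  · have : (β+1)*b ≤ β'*b := Nat.mul_le_mul_right _ hlt
    simp only [add_mul, one_mul] at this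
    omega
  · have hlt : β' < β := by omega
    have : (β'+1)*b ≤ β*b := Nat.mul_le_mul_right _ hlt
    simp only [add_mul, one_mul] at this
    omega

lemma sigma_count {m : ℕ} {α : Type*} [DecidableEq α] (u v : Fin m → α) (T : Finset α)
    (r b : ℕ) :
    #(univ.filter fun σ : Fin m → Bool =>
        (∀ i, cond (σ i) (v i) (u i) ∉ T) ∧
        (∀ β ∈ range r, ∃ i ∈ blk m b β, cond (σ i) (u i) (v i) ∈ T)) ≤ 2 ^ (m - r) := by
  set E := univ.filter fun σ : Fin m → Bool =>
        (∀ i, cond (σ i) (v i) (u i) ∉ T) ∧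
        (∀ β ∈ range r, ∃ i ∈ blk m b β, cond (σ i) (u i) (v i) ∈ T) with hE
  rcases E.eq_empty_or_nonempty with h | ⟨σ₀, hσ₀⟩
  · simp [h]
  have hσ₀' := (mem_filter.mp hσ₀).2
  have hboth : ∀ i, ¬(u i ∈ T ∧ v i ∈ T) := by
    rintro i ⟨hu, hv⟩
    have h1 := hσ₀'.1 i
    cases hc : σ₀ i <;> rw [hc] at h1 <;> simp at h1 <;> [exact h1 hu; exact h1 hv]
  set J := univ.filter (fun i => u i ∈ T ∨ v i ∈ T) with hJ
  have claim1 : ∀ σ ∈ E, ∀ i ∈ J, σ i = decide (u i ∈ T) := by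
    intro σ hσ i hi
    have h1 := (mem_filter.mp hσ).2.1 i
    simp only [hJ, mem_filter, mem_univ, true_and] at hi
    rcases hi with hu | hv
    · have hv : v i ∉ T := fun hv => hboth i ⟨hu, hv⟩
      cases hσi : σ i
      · rw [hσi] at h1; simp at h1; exact absurd hu h1
      · simp [hu]
    · have hu : u i ∉ T := fun hu => hboth i ⟨hu, hv⟩
      cases hσi : σ i
      · simp [hu]
      · rw [hσi] at h1; simp at h1; exact absurd hv h1
  have claim2 : r ≤ #J := by
    have hex : ∀ β ∈ range r, ∃ i, i ∈ blk m b β ∧ cond (σ₀ i) (u i) (v i) ∈ T := by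
      intro β hβ
      obtain ⟨i, hi, hit⟩ := hσ₀'.2 β hβ
      exact ⟨i, hi, hit⟩
    rcases Nat.eq_zero_or_pos r with hr | hr
    · omega
    have h0 : (0 : ℕ) ∈ range r := mem_range.mpr hr
    obtain ⟨i₀, _, _⟩ := hex 0 h0
    classical
    have := Finset.card_le_card_of_injOn
      (f := fun β : ℕ => if h : β ∈ range r then (hex β h).choose else i₀)
      (s := range r) (t := J) ?_ ?_
    · simpa using this
    · intro β hβ
      rw [Finset.mem_coe] at hβ
      simp only [dif_pos hβ]
      obtain ⟨hmem, hit⟩ := (hex β hβ).choose_spec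
      simp only [hJ, mem_coe, mem_filter, mem_univ, true_and]
      cases hc : σ₀ ((hex β hβ).choose)
      · rw [hc] at hit; simp at hit; right; exact hit
      · rw [hc] at hit; simp at hit; left; exact hit
    · intro β hβ β' hβ' heq
      simp only [Finset.mem_coe] at hβ hβ'
      simp only [dif_pos hβ, dif_pos hβ'] at heq
      have h1 := (hex β hβ).choose_spec.1
      have h2 := (hex β' hβ').choose_spec.1
      rw [heq] at h1
      exact blk_inj h1 h2
  have hsub : E ⊆ univ.filter (fun σ : Fin m → Bool => ∀ i ∈ J, σ i ∈ ({decide (u i ∈ T)} : Finset Bool)) := by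
    intro σ hσ
    simp only [mem_filter, mem_univ, true_and, mem_singleton]
    exact claim1 σ hσ
  calc #E ≤ _ := card_le_card hsub
    _ = (∏ i ∈ J, #({decide (u i ∈ T)} : Finset Bool)) * (Fintype.card Bool) ^ (m - #J) :=
        filter_coord_card J _
    _ ≤ 2 ^ (m - r) := by
        simp only [card_singleton, prod_const_one, one_mul, Fintype.card_bool]
        exact Nat.pow_le_pow_right (by norm_num) (Nat.sub_le_sub_left claim2 m)

lemma sum_pow_le {n D : ℕ} (hn : 1 ≤ n) : ∑ j ∈ range D, n^j ≤ (n+1)^D := by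
  induction D with
  | zero => simp
  | succ D ih =>
    rw [sum_range_succ, pow_succ]
    have h1 : n^D ≤ (n+1)^D * n := le_trans (by nlinarith [pow_pos (by omega : 0 < n) D]) (Nat.mul_le_mul_right n (Nat.pow_le_pow_left (by omega) D))
    nlinarith

lemma trace_card_le {α : Type*} [DecidableEq α] (F : Finset (Finset α)) (Y : Finset α) (D : ℕ)
    (hY : 1 ≤ #Y) (hsh : ∀ s : Finset α, #s = D → ¬ F.Shatters s) :
    #(F.image (· ∩ Y)) ≤ (#Y + 1)^D := by
  set 𝒢 := F.image (· ∩ Y) with h𝒢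
  have h2 : 𝒢.shatterer ⊆ (range D).biUnion (fun j => Y.powersetCard j) := by
    intro s hs
    rw [mem_shatterer] at hs
    have hsY : s ⊆ Y := by
      obtain ⟨t, ht, hst⟩ := hs.exists_superset
      obtain ⟨f, _, rfl⟩ := mem_image.mp ht
      exact hst.trans inter_subset_right
    have hcard : #s < D := by
      by_contra h
      push_neg at h
      obtain ⟨s₀, hs₀s, hs₀card⟩ := exists_subset_card_eq h
      apply hsh s₀ hs₀card
      intro t ht
      obtain ⟨uu, huu, hint⟩ := (hs.mono_right hs₀s) ht
      obtain ⟨f, hf, rfl⟩ := mem_image.mp huu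
      refine ⟨f, hf, ?_⟩
      rw [← hint]
      have hs₀Y : s₀ ⊆ Y := hs₀s.trans hsY
      rw [inter_comm f Y, ← inter_assoc, inter_eq_left.mpr hs₀Y]
    exact mem_biUnion.mpr ⟨#s, mem_range.mpr hcard, mem_powersetCard.mpr ⟨hsY, rfl⟩⟩
  calc #𝒢 ≤ #𝒢.shatterer := card_le_card_shatterer 𝒢
    _ ≤ #((range D).biUnion fun j => Y.powersetCard j) := card_le_card h2
    _ ≤ ∑ j ∈ range D, #(Y.powersetCard j) := card_biUnion_le
    _ = ∑ j ∈ range D, (#Y).choose j := by simp [card_powersetCard]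
    _ ≤ ∑ j ∈ range D, (#Y)^j := sum_le_sum fun j _ => Nat.choose_le_pow _ _
    _ ≤ (#Y + 1)^D := sum_pow_le hY

lemma quad_lt_64pow (D : ℕ) (hD : 1 ≤ D) : 12*D^2 + 6*D + 1 < 64^D := by
  induction D with
  | zero => omega
  | succ D ih =>
    rcases Nat.eq_zero_or_pos D with rfl | hD'
    · norm_num
    · have h := ih hD'
      have h64 : (64:ℕ)^(D+1) = 64 * 64^D := by ring
      nlinarith

lemma key_ineq (D t : ℕ) (hD : 1 ≤ D) (ht : 1 ≤ t) :
    2 * (2*(2^(6*D)*t*(2*(2^(6*D)*t)*t))+1)^D < 2^(2^(6*D)*t) := by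
  set x := 2^(6*D) with hx
  have hx1 : 1 ≤ x := Nat.one_le_two_pow
  have hpos : 1 ≤ x^2*t^3 := Nat.one_le_iff_ne_zero.mpr (by positivity)
  have hm : 2*(x*t*(2*(x*t)*t))+1 ≤ 8*x^2*t^3 := by
    have e1 : 2*(x*t*(2*(x*t)*t))+1 = 4*(x^2*t^3)+1 := by ring
    have e2 : 8*x^2*t^3 = 8*(x^2*t^3) := by ring
    rw [e1, e2]; omega
  have ht2 : t ≤ 2^t := Nat.le_of_lt Nat.lt_two_pow_self
  have h_inner : 8*x^2*t^3 ≤ 2^(3+12*D+3*t) := by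
    calc 8*x^2*t^3 ≤ 8*x^2*(2^t)^3 := by
          apply Nat.mul_le_mul_left
          exact Nat.pow_le_pow_left ht2 3
      _ = 2^(3+12*D+3*t) := by
          rw [hx, ← pow_mul, ← pow_mul, show (8:ℕ) = 2^3 from rfl, ← pow_add, ← pow_add]
          congr 1
          ring
  have h3 : (2*(x*t*(2*(x*t)*t))+1)^D ≤ 2^((3+12*D+3*t)*D) := by
    rw [pow_mul]
    exact Nat.pow_le_pow_left (hm.trans h_inner) D
  have hq := quad_lt_64pow D hD
  have h64 : (64:ℕ)^D = x := by
    rw [hx, show (64:ℕ) = 2^6 from rfl, ← pow_mul]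
  have hexp : 1 + (3+12*D+3*t)*D < x * t := by
    have hle : 1 + (3+12*D+3*t)*D ≤ (12*D^2 + 6*D + 1) * t := by nlinarith
    calc 1 + (3+12*D+3*t)*D ≤ (12*D^2 + 6*D + 1) * t := hle
      _ < 64^D * t := (Nat.mul_lt_mul_right (show 0 < t by omega)).mpr hq
      _ = x * t := by rw [h64]
  calc 2 * (2*(x*t*(2*(x*t)*t))+1)^D ≤ 2 * 2^((3+12*D+3*t)*D) := Nat.mul_le_mul_left 2 h3
    _ = 2^(1 + (3+12*D+3*t)*D) := by rw [pow_add 2 1]; ring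
    _ < 2^(x*t) := Nat.pow_lt_pow_right (by norm_num) hexp

lemma bernoulli_block_bound (N s t b r : ℕ) (hs : 1 ≤ s) (hsN : s ≤ N) (hN : N ≤ t*s)
    (hb : b = 2*r*t) (ht : 1 ≤ t) :
    2*r*(N-s)^b ≤ N^b := by
  have hN1 : 1 ≤ N := hs.trans hsN
  have hN0 : (0:ℝ) < (N:ℝ) := by exact_mod_cast hN1
  set y : ℝ := (s:ℝ)/(N:ℝ) with hy
  have hy0 : 0 < y := div_pos (by exact_mod_cast hs) hN0
  have hy1 : y ≤ 1 := by
    rw [hy, div_le_one hN0]; exact_mod_cast hsN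
  have hcast : ((N-s:ℕ):ℝ) = (N:ℝ)*(1-y) := by
    rw [hy]; push_cast [hsN]; field_simp
  have h1 : (1 + (b:ℝ)*y) ≤ (1+y)^b := one_add_mul_le_pow (by linarith) b
  have h2r : (2*r:ℝ) ≤ 1 + (b:ℝ)*y := by
    have hby : (b:ℝ)*y ≥ (2*r:ℝ) := by
      rw [hb, hy]
      have h1t : (1:ℝ)/t ≤ y := by
        rw [hy, div_le_div_iff₀ (by exact_mod_cast ht) hN0]
        calc (1:ℝ)*N = N := by ring
          _ ≤ t*s := by exact_mod_cast hN
          _ = s*t := by ring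
      push_cast
      calc (2*(r:ℝ)*(t:ℝ))*((s:ℝ)/(N:ℝ)) ≥ (2*(r:ℝ)*(t:ℝ))*(1/t) := by
            apply mul_le_mul_of_nonneg_left h1t (by positivity)
        _ = 2*r := by field_simp
    linarith
  have key : (2*r:ℝ)*((N-s:ℕ):ℝ)^b ≤ (N:ℝ)^b := by
    rw [hcast, mul_pow]
    have h1y : (0:ℝ) ≤ 1 - y := by linarith
    calc (2*r:ℝ)*((N:ℝ)^b*(1-y)^b) ≤ (1+(b:ℝ)*y)*((N:ℝ)^b*(1-y)^b) := by
          apply mul_le_mul_of_nonneg_right h2r (by positivity)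
      _ ≤ (1+y)^b*((N:ℝ)^b*(1-y)^b) := by
          apply mul_le_mul_of_nonneg_right h1 (by positivity)
      _ = (N:ℝ)^b * ((1+y)*(1-y))^b := by rw [mul_pow]; ring
      _ ≤ (N:ℝ)^b * 1 := by
          apply mul_le_mul_of_nonneg_left _ (by positivity)
          apply pow_le_one₀ (by nlinarith) (by nlinarith)
      _ = (N:ℝ)^b := by ring
  exact_mod_cast key
theorem exists_net {α : Type*} [Fintype α] [DecidableEq α] [Nonempty α]
    (F : Finset (Finset α)) (D t : ℕ) (hD : 1 ≤ D) (ht : 1 ≤ t)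
    (hsize : ∀ S ∈ F, Fintype.card α ≤ t * #S)
    (hsh : ∀ Y : Finset α, #Y = D → ¬ F.Shatters Y) :
    ∃ Net : Finset α, #Net ≤ 2^(6*D)*t*(2*(2^(6*D)*t)*t) ∧
      ∀ S ∈ F, (S ∩ Net).Nonempty := by
  classical
  set r := 2^(6*D)*t with hr
  set b := 2*r*t with hb
  set m := r*b with hm
  set N := Fintype.card α with hN
  have hr1 : 1 ≤ r := Nat.le_trans ht (by rw [hr]; exact Nat.le_mul_of_pos_left t Nat.one_le_two_pow)
  have hb1 : 1 ≤ b := by rw [hb]; nlinarith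
  have hm1 : 1 ≤ m := by rw [hm]; nlinarith
  have hrm : r ≤ m := by rw [hm]; exact Nat.le_mul_of_pos_right r hb1
  have hbm : b ≤ m := by rw [hm]; exact Nat.le_mul_of_pos_left b hr1
  have hN1 : 1 ≤ N := Fintype.card_pos
  -- the missing-sample set and the two-sided bad set
  set Miss : Finset (Fin m → α) := univ.filter (fun u => ∃ S ∈ F, ∀ i, u i ∉ S) with hMiss
  set Bad2 : Finset ((Fin m → α) × (Fin m → α)) :=
    univ.filter (fun p => ∃ S ∈ F, (∀ i, p.1 i ∉ S) ∧
      (∀ β ∈ range r, ∃ i ∈ blk m b β, p.2 i ∈ S)) with hBad2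
  -- choice of a missed set
  have hSu : ∀ u ∈ Miss, ∃ S, S ∈ F ∧ ∀ i, u i ∉ S := by
    intro u hu
    have := (mem_filter.mp hu).2
    obtain ⟨S, hS, hmiss⟩ := this
    exact ⟨S, hS, hmiss⟩
  set Su : (Fin m → α) → Finset α := fun u =>
    if h : ∃ S, S ∈ F ∧ ∀ i, u i ∉ S then h.choose else ∅ with hSudef
  have hSuF : ∀ u ∈ Miss, Su u ∈ F ∧ ∀ i, u i ∉ Su u := by
    intro u hu
    have h := hSu u hu
    simp only [hSudef, dif_pos h]
    exact h.choose_spec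
  set Good : (Fin m → α) → Finset (Fin m → α) := fun u =>
    univ.filter (fun v => ∀ β ∈ range r, ∃ i ∈ blk m b β, v i ∈ Su u) with hGood
  -- step 1 : per-u bound
  have stepA1 : ∀ u ∈ Miss, N^m ≤ 2 * #(Good u) := by
    intro u hu
    obtain ⟨hSF, _⟩ := hSuF u hu
    set s := #(Su u) with hs
    have hsize' : N ≤ t * s := hsize _ hSF
    have hs1 : 1 ≤ s := by nlinarith
    have hsN : s ≤ N := by
      rw [hs, hN]; exact card_le_card (subset_univ _) |>.trans (le_of_eq (card_univ))
    have hsplit := Finset.card_filter_add_card_filter_not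
      (s := (univ : Finset (Fin m → α)))
      (fun v => ∀ β ∈ range r, ∃ i ∈ blk m b β, v i ∈ Su u)
    have htot : #(univ : Finset (Fin m → α)) = N^m := by
      rw [card_univ, Fintype.card_fun, Fintype.card_fin, hN]
    have hbadsub : univ.filter (fun v : Fin m → α =>
        ¬ ∀ β ∈ range r, ∃ i ∈ blk m b β, v i ∈ Su u) ⊆
        (range r).biUnion (fun β => univ.filter
          (fun v : Fin m → α => ∀ i ∈ blk m b β, v i ∈ univ \ Su u)) := by
      intro v hv
      simp only [mem_filter, mem_univ, true_and] at hv
      push_neg at hv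
      obtain ⟨β, hβ, hmiss⟩ := hv
      apply mem_biUnion.mpr
      refine ⟨β, hβ, ?_⟩
      simp only [mem_filter, mem_univ, true_and]
      intro i hi
      simp only [mem_sdiff, mem_univ, true_and]
      exact fun hc => hmiss i hi hc
    have hbadcard : #(univ.filter (fun v : Fin m → α =>
        ¬ ∀ β ∈ range r, ∃ i ∈ blk m b β, v i ∈ Su u)) ≤ r * ((N-s)^b * N^(m-b)) := by
      calc #(univ.filter _) ≤ ∑ β ∈ range r, #(univ.filter
            (fun v : Fin m → α => ∀ i ∈ blk m b β, v i ∈ univ \ Su u)) :=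
            (card_le_card hbadsub).trans card_biUnion_le
        _ ≤ ∑ β ∈ range r, (N-s)^b * N^(m-b) := by
            apply sum_le_sum
            intro β hβ
            rw [filter_coord_card, prod_const, blk_card hm (mem_range.mp hβ) hb1]
            rw [card_sdiff_of_subset (subset_univ _), card_univ, ← hN, ← hs]
        _ = r * ((N-s)^b * N^(m-b)) := by rw [sum_const, card_range, smul_eq_mul]
    have hbern : 2*r*(N-s)^b ≤ N^b :=
      bernoulli_block_bound N s t b r hs1 hsN hsize' hb ht
    have h2bad : 2 * #(univ.filter (fun v : Fin m → α =>
        ¬ ∀ β ∈ range r, ∃ i ∈ blk m b β, v i ∈ Su u)) ≤ N^m := by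
      calc 2 * #(univ.filter _) ≤ 2 * (r * ((N-s)^b * N^(m-b))) :=
            Nat.mul_le_mul_left 2 hbadcard
        _ = (2*r*(N-s)^b) * N^(m-b) := by ring
        _ ≤ N^b * N^(m-b) := Nat.mul_le_mul hbern le_rfl
        _ = N^m := by rw [← pow_add, Nat.add_sub_cancel' hbm]
    have hGoodu : #(Good u) + #(univ.filter (fun v : Fin m → α =>
        ¬ ∀ β ∈ range r, ∃ i ∈ blk m b β, v i ∈ Su u)) = N^m := by
      exact hsplit.trans htot
    have h7 : 2 * #(Good u) + 2 * #(univ.filter (fun v : Fin m → α =>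
        ¬ ∀ β ∈ range r, ∃ i ∈ blk m b β, v i ∈ Su u)) = 2*(N^m) := by
      rw [← hGoodu]; ring
    have h5 : N^m + 2 * #(univ.filter (fun v : Fin m → α =>
        ¬ ∀ β ∈ range r, ∃ i ∈ blk m b β, v i ∈ Su u)) ≤
        2 * #(Good u) + 2 * #(univ.filter (fun v : Fin m → α =>
        ¬ ∀ β ∈ range r, ∃ i ∈ blk m b β, v i ∈ Su u)) := by
      rw [h7]; linarith [h2bad]
    exact Nat.le_of_add_le_add_right h5
  -- step 1 : sum over Miss
  have stepA : #Miss * N^m ≤ 2 * #Bad2 := by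
    have hsig : ∑ u ∈ Miss, #(Good u) = #(Miss.sigma (fun u => Good u)) :=
      (card_sigma _ _).symm
    have hinj : #(Miss.sigma (fun u => Good u)) ≤ #Bad2 := by
      apply Finset.card_le_card_of_injOn (f := fun p : Σ _ : Fin m → α, Fin m → α => (p.1, p.2))
      · rintro ⟨u, v⟩ hp
        rw [Finset.mem_coe, Finset.mem_sigma] at hp
        obtain ⟨hu, hv⟩ := hp
        obtain ⟨hSF, hmiss⟩ := hSuF u hu
        simp only [hBad2, mem_coe, mem_filter, mem_univ, true_and]
        refine ⟨Su u, hSF, hmiss, ?_⟩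
        have := (mem_filter.mp hv).2
        exact this
      · rintro ⟨u, v⟩ _ ⟨u', v'⟩ _ h
        simp only [Prod.mk.injEq] at h
        exact Sigma.ext h.1 (heq_of_eq h.2)
    calc #Miss * N^m = ∑ _u ∈ Miss, N^m := by rw [sum_const, smul_eq_mul]
      _ ≤ ∑ u ∈ Miss, 2 * #(Good u) := sum_le_sum stepA1
      _ = 2 * ∑ u ∈ Miss, #(Good u) := by rw [mul_sum]
      _ ≤ 2 * #Bad2 := by rw [hsig]; exact Nat.mul_le_mul_left 2 hinj
  -- step 2 : the swapping bound
  set Φ : (Fin m → Bool) → (Fin m → α) × (Fin m → α) → (Fin m → α) × (Fin m → α) :=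
    fun σ p => (fun i => cond (σ i) (p.2 i) (p.1 i), fun i => cond (σ i) (p.1 i) (p.2 i)) with hΦ
  have hΦΦ : ∀ σ p, Φ σ (Φ σ p) = p := by
    rintro σ ⟨u, v⟩
    simp only [hΦ]
    rw [Prod.mk.injEq]
    constructor <;> funext i <;> cases hc : σ i <;> simp [hc]
  have stepB1 : ∀ σ, #Bad2 = #(univ.filter (fun p => Φ σ p ∈ Bad2)) := by
    intro σ
    apply Finset.card_nbij' (i := fun p => Φ σ p) (j := fun p => Φ σ p)
    · intro p hp
      simp only [mem_coe, mem_filter, mem_univ, true_and]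
      rw [hΦΦ]
      exact hp
    · intro p hp
      exact (mem_filter.mp hp).2
    · intro p _
      exact hΦΦ σ p
    · intro p _
      exact hΦΦ σ p
  have stepB4 : ∀ u v : Fin m → α,
      #(univ.filter (fun σ : Fin m → Bool => Φ σ (u, v) ∈ Bad2)) ≤ (2*m+1)^D * 2^(m-r) := by
    intro u v
    set Y := (image u univ) ∪ (image v univ) with hY
    have hYc : #Y ≤ 2*m := by
      calc #Y ≤ #(image u univ) + #(image v univ) := card_union_le _ _
        _ ≤ m + m := by
            apply Nat.add_le_add <;>
              exact card_image_le.trans (by rw [card_univ, Fintype.card_fin])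
        _ = 2*m := by ring
    have hm0 : 0 < m := hm1
    have hY1 : 1 ≤ #Y := by
      apply card_pos.mpr
      exact ⟨u ⟨0, hm0⟩, mem_union_left _ (mem_image_of_mem u (mem_univ _))⟩
    have hsub : univ.filter (fun σ : Fin m → Bool => Φ σ (u, v) ∈ Bad2) ⊆
        (F.image (· ∩ Y)).biUnion (fun T => univ.filter (fun σ : Fin m → Bool =>
          (∀ i, cond (σ i) (v i) (u i) ∉ T) ∧
          (∀ β ∈ range r, ∃ i ∈ blk m b β, cond (σ i) (u i) (v i) ∈ T))) := by
      intro σ hσ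
      have hσ' := (mem_filter.mp hσ).2
      rw [hBad2, mem_filter] at hσ'
      obtain ⟨S, hSF, h1, h2⟩ := hσ'.2
      apply mem_biUnion.mpr
      refine ⟨S ∩ Y, mem_image_of_mem _ hSF, ?_⟩
      simp only [mem_filter, mem_univ, true_and]
      constructor
      · intro i hc
        exact h1 i (mem_of_mem_inter_left hc)
      · intro β hβ
        obtain ⟨i, hi, hit⟩ := h2 β hβ
        refine ⟨i, hi, mem_inter.mpr ⟨hit, ?_⟩⟩
        cases hc : σ i
        · simp only [Bool.cond_false]
          exact mem_union_right _ (mem_image_of_mem v (mem_univ i))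
        · simp only [Bool.cond_true]
          exact mem_union_left _ (mem_image_of_mem u (mem_univ i))
    calc #(univ.filter (fun σ : Fin m → Bool => Φ σ (u, v) ∈ Bad2))
        ≤ #((F.image (· ∩ Y)).biUnion (fun T => univ.filter (fun σ : Fin m → Bool =>
            (∀ i, cond (σ i) (v i) (u i) ∉ T) ∧
            (∀ β ∈ range r, ∃ i ∈ blk m b β, cond (σ i) (u i) (v i) ∈ T)))) :=
          card_le_card hsub
      _ ≤ ∑ T ∈ F.image (· ∩ Y), #(univ.filter (fun σ : Fin m → Bool =>
            (∀ i, cond (σ i) (v i) (u i) ∉ T) ∧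
            (∀ β ∈ range r, ∃ i ∈ blk m b β, cond (σ i) (u i) (v i) ∈ T))) :=
          card_biUnion_le
      _ ≤ ∑ _T ∈ F.image (· ∩ Y), 2^(m-r) :=
          sum_le_sum (fun T _ => sigma_count u v T r b)
      _ = #(F.image (· ∩ Y)) * 2^(m-r) := by rw [sum_const, smul_eq_mul]
      _ ≤ (2*m+1)^D * 2^(m-r) := by
          apply Nat.mul_le_mul_right
          calc #(F.image (· ∩ Y)) ≤ (#Y + 1)^D := trace_card_le F Y D hY1 hsh
            _ ≤ (2*m+1)^D := Nat.pow_le_pow_left (by omega) D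
  have stepB : #Bad2 * 2^r ≤ (N^m * N^m) * (2*m+1)^D := by
    have htot2 : #(univ : Finset ((Fin m → α) × (Fin m → α))) = N^m * N^m := by
      rw [card_univ, Fintype.card_prod, Fintype.card_fun, Fintype.card_fin, hN]
    have hcount : #Bad2 * 2^m =
        ∑ p ∈ (univ : Finset ((Fin m → α) × (Fin m → α))),
          #(univ.filter (fun σ : Fin m → Bool => Φ σ p ∈ Bad2)) := by
      calc #Bad2 * 2^m = ∑ _σ ∈ (univ : Finset (Fin m → Bool)), #Bad2 := by
            rw [sum_const, card_univ, Fintype.card_fun, Fintype.card_fin,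
              Fintype.card_bool, smul_eq_mul, mul_comm]
        _ = ∑ σ ∈ (univ : Finset (Fin m → Bool)),
              #(univ.filter (fun p => Φ σ p ∈ Bad2)) :=
            sum_congr rfl (fun σ _ => stepB1 σ)
        _ = ∑ σ ∈ (univ : Finset (Fin m → Bool)),
              ∑ p ∈ (univ : Finset ((Fin m → α) × (Fin m → α))),
                (if Φ σ p ∈ Bad2 then 1 else 0) := by
            apply sum_congr rfl
            intro σ _
            rw [card_filter]
        _ = ∑ p ∈ (univ : Finset ((Fin m → α) × (Fin m → α))),
              ∑ σ ∈ (univ : Finset (Fin m → Bool)),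
                (if Φ σ p ∈ Bad2 then 1 else 0) := Finset.sum_comm
        _ = ∑ p ∈ (univ : Finset ((Fin m → α) × (Fin m → α))),
              #(univ.filter (fun σ : Fin m → Bool => Φ σ p ∈ Bad2)) := by
            apply sum_congr rfl
            intro p _
            rw [card_filter]
    have hB2m : #Bad2 * 2^m ≤ (N^m * N^m) * ((2*m+1)^D * 2^(m-r)) := by
      rw [hcount]
      calc ∑ p ∈ (univ : Finset ((Fin m → α) × (Fin m → α))),
            #(univ.filter (fun σ : Fin m → Bool => Φ σ p ∈ Bad2))
          ≤ ∑ _p ∈ (univ : Finset ((Fin m → α) × (Fin m → α))), (2*m+1)^D * 2^(m-r) :=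
            sum_le_sum (fun p _ => stepB4 p.1 p.2)
        _ = (N^m * N^m) * ((2*m+1)^D * 2^(m-r)) := by
            rw [sum_const, smul_eq_mul, htot2]
    have hsplit2 : (2:ℕ)^m = 2^(m-r) * 2^r := by
      rw [← pow_add, Nat.sub_add_cancel hrm]
    refine Nat.le_of_mul_le_mul_right ?_ (pow_pos (by norm_num : (0:ℕ) < 2) (m-r))
    calc #Bad2 * 2^r * 2^(m-r) = #Bad2 * (2^(m-r) * 2^r) := by ring
      _ = #Bad2 * 2^m := by rw [← hsplit2]
      _ ≤ (N^m * N^m) * ((2*m+1)^D * 2^(m-r)) := hB2m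
      _ = (N^m * N^m) * (2*m+1)^D * 2^(m-r) := by ring
  -- conclusion
  have hkey' : 2*(2*m+1)^D < 2^r := by
    rw [hm, hb, hr]
    exact key_ineq D t hD ht
  have hNm0 : 0 < N^m := pow_pos hN1 m
  have hMissLt : #Miss < N^m := by
    by_contra hc
    push_neg at hc
    have h1 : N^m * N^m * 2^r ≤ #Miss * N^m * 2^r :=
      Nat.mul_le_mul_right _ (Nat.mul_le_mul_right _ hc)
    have h2 : #Miss * N^m * 2^r ≤ 2 * #Bad2 * 2^r := Nat.mul_le_mul_right _ stepA
    have h3 : 2 * #Bad2 * 2^r = 2 * (#Bad2 * 2^r) := by ring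
    have h4 : 2 * (#Bad2 * 2^r) ≤ 2 * ((N^m * N^m) * (2*m+1)^D) :=
      Nat.mul_le_mul_left _ stepB
    have h5 : 2 * ((N^m * N^m) * (2*m+1)^D) = (N^m * N^m) * (2 * (2*m+1)^D) := by ring
    have h6 : (N^m * N^m) * (2 * (2*m+1)^D) < (N^m * N^m) * 2^r :=
      (Nat.mul_lt_mul_left (Nat.mul_pos hNm0 hNm0)).mpr hkey'
    have : N^m * N^m * 2^r < N^m * N^m * 2^r :=
      ((((h1.trans h2).trans_eq h3).trans h4).trans_eq h5).trans_lt h6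
    exact lt_irrefl _ this
  have hne : Miss ≠ univ := by
    intro h
    rw [h, card_univ, Fintype.card_fun, Fintype.card_fin, ← hN] at hMissLt
    exact lt_irrefl _ hMissLt
  obtain ⟨u, _, hu_not⟩ := Finset.exists_of_ssubset (ssubset_univ_iff.mpr hne)
  refine ⟨(univ : Finset (Fin m)).image u, ?_, ?_⟩
  · calc #((univ : Finset (Fin m)).image u) ≤ #(univ : Finset (Fin m)) := card_image_le
      _ = m := by rw [card_univ, Fintype.card_fin]
      _ = 2^(6*D)*t*(2*(2^(6*D)*t)*t) := by rw [hm, hb, hr]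
  · intro S hS
    have h8 : ¬ (∃ S ∈ F, ∀ i, u i ∉ S) := by
      intro hc
      exact hu_not (mem_filter.mpr ⟨mem_univ _, hc⟩)
    push_neg at h8
    obtain ⟨i, hi⟩ := h8 S hS
    exact ⟨u i, mem_inter.mpr ⟨hi, mem_image_of_mem u (mem_univ i)⟩⟩


lemma triple_prod {G : Type*} [DecidableEq G] [Group G] (A : Finset G) (ε : Fin 3 → ℤ) :
    ((List.finRange 3).map fun i => A ^ ε i).prod = A ^ (ε 0) * A ^ (ε 1) * A ^ (ε 2) := by
  simp [List.finRange_succ, mul_assoc]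

lemma tripling_B3 {G : Type*} [DecidableEq G] [Group G] (A : Finset G) (k : ℝ)
    (h3 : (#(A*A*A) : ℝ) ≤ k * #A) :
    (#((A ∪ A⁻¹)^3) : ℝ) ≤ 8 * k^3 * #A := by
  have h3' : (#(A^3) : ℝ) ≤ k * #A := by
    rw [show A^3 = A*A*A by rw [pow_succ, pow_succ, pow_one]]
    exact h3
  set f : Bool → Finset G := fun s => cond s A A⁻¹ with hf
  have hfz : ∀ s : Bool, f s = A ^ (cond s 1 (-1) : ℤ) := by
    intro s; cases s <;> simp [hf]
  have hcover : (A ∪ A⁻¹)^3 ⊆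
      (univ : Finset (Bool × Bool × Bool)).biUnion
        (fun s => f s.1 * f s.2.1 * f s.2.2) := by
    intro x hx
    rw [show (3:ℕ) = 2+1 from rfl, pow_succ, pow_succ, pow_one] at hx
    obtain ⟨y, hy, c, hc, rfl⟩ := mem_mul.mp hx
    obtain ⟨a, ha, b, hb, rfl⟩ := mem_mul.mp hy
    rw [mem_union] at ha hb hc
    apply mem_biUnion.mpr
    rcases ha with ha | ha <;> rcases hb with hb | hb <;> rcases hc with hc | hc
    exacts [⟨(true,true,true), mem_univ _, mul_mem_mul (mul_mem_mul ha hb) hc⟩,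
      ⟨(true,true,false), mem_univ _, mul_mem_mul (mul_mem_mul ha hb) hc⟩,
      ⟨(true,false,true), mem_univ _, mul_mem_mul (mul_mem_mul ha hb) hc⟩,
      ⟨(true,false,false), mem_univ _, mul_mem_mul (mul_mem_mul ha hb) hc⟩,
      ⟨(false,true,true), mem_univ _, mul_mem_mul (mul_mem_mul ha hb) hc⟩,
      ⟨(false,true,false), mem_univ _, mul_mem_mul (mul_mem_mul ha hb) hc⟩,
      ⟨(false,false,true), mem_univ _, mul_mem_mul (mul_mem_mul ha hb) hc⟩,
      ⟨(false,false,false), mem_univ _, mul_mem_mul (mul_mem_mul ha hb) hc⟩]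
  have hterm : ∀ s : Bool × Bool × Bool,
      (#(f s.1 * f s.2.1 * f s.2.2) : ℝ) ≤ k^3 * #A := by
    intro s
    have := Finset.small_alternating_pow_of_small_tripling (A := A) (K := k) (m := 3)
      le_rfl h3' ![cond s.1 1 (-1), cond s.2.1 1 (-1), cond s.2.2 1 (-1)]
      (fun i => by fin_cases i <;> rcases s with ⟨s1, s2, s3⟩ <;> cases s1 <;> cases s2 <;>
        cases s3 <;> simp)
    rw [triple_prod] at this
    simp only [Matrix.cons_val_zero, Matrix.cons_val_one, Matrix.head_cons] at this
    rw [hfz s.1, hfz s.2.1, hfz s.2.2]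
    calc (#(A ^ (cond s.1 1 (-1):ℤ) * A ^ (cond s.2.1 1 (-1):ℤ) * A ^ (cond s.2.2 1 (-1):ℤ)) : ℝ)
        ≤ k ^ (3*(3-2)) * #A := by
          convert this using 4 <;> simp [Matrix.cons_val_succ]
      _ = k^3 * #A := by norm_num
  calc (#((A ∪ A⁻¹)^3) : ℝ) ≤ (#((univ : Finset (Bool × Bool × Bool)).biUnion
        (fun s => f s.1 * f s.2.1 * f s.2.2)) : ℝ) := by
        exact_mod_cast card_le_card hcover
    _ ≤ ∑ s ∈ (univ : Finset (Bool × Bool × Bool)), (#(f s.1 * f s.2.1 * f s.2.2) : ℝ) := by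
        exact_mod_cast card_biUnion_le
    _ ≤ ∑ _s ∈ (univ : Finset (Bool × Bool × Bool)), k^3 * (#A : ℝ) :=
        sum_le_sum (fun s _ => hterm s)
    _ = 8 * k^3 * #A := by
        rw [sum_const]
        simp [card_univ]
        ring
end AuxNet

section AuxNIP
open Finset
open scoped Pointwise

lemma no_shatter_left {G : Type*} [Group G] [DecidableEq G] {A : Set G} {d : ℕ}
    (hnip : IsNIPSet A d) (Ω : Finset G) (Afin : Finset G) (hAfin : (Afin : Set G) = A)
    (X : Finset G) (Y : Finset {x // x ∈ Ω}) (hY : #Y = 2^d) :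
    ¬ (X.image (fun x => (univ : Finset {x // x ∈ Ω}).filter
        (fun e : {x // x ∈ Ω} => (e : G)⁻¹ * x ∈ Afin))).Shatters Y := by
  intro hshat
  have hcard : Fintype.card (Finset (Fin d)) = Fintype.card {y // y ∈ Y} := by
    rw [Fintype.card_finset, Fintype.card_fin, Fintype.card_coe, hY]
  set χ : Finset (Fin d) ≃ {y // y ∈ Y} := Fintype.equivOfCardEq hcard with hχ
  set Jset : Fin d → Finset {x // x ∈ Ω} := fun j =>
    (univ.filter (fun T : Finset (Fin d) => j ∈ T)).image
      (fun T => ((χ T : {y // y ∈ Y}) : {x // x ∈ Ω})) with hJset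
  have hJsub : ∀ j, Jset j ⊆ Y := by
    intro j e he
    rw [hJset] at he
    obtain ⟨T, _, rfl⟩ := mem_image.mp he
    exact (χ T).2
  have hx : ∀ j : Fin d, ∃ x, x ∈ X ∧
      Y ∩ ((univ : Finset {x // x ∈ Ω}).filter (fun e : {x // x ∈ Ω} => (e : G)⁻¹ * x ∈ Afin)) = Jset j := by
    intro j
    obtain ⟨u, hu, hint⟩ := hshat (hJsub j)
    obtain ⟨x, hxX, rfl⟩ := mem_image.mp hu
    exact ⟨x, hxX, hint⟩
  choose xw hxw1 hxw2 using hx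
  apply hnip
  refine ⟨fun j => xw j, fun T => (((χ T : {y // y ∈ Y}) : {x // x ∈ Ω}) : G)⁻¹, ?_⟩
  intro T j
  have hmemY : ((χ T : {y // y ∈ Y}) : {x // x ∈ Ω}) ∈ Y := (χ T).2
  have h1 : ((((χ T : {y // y ∈ Y}) : {x // x ∈ Ω}) : G)⁻¹ * xw j ∈ A) ↔
      (((χ T : {y // y ∈ Y}) : {x // x ∈ Ω}) ∈
        (univ : Finset {x // x ∈ Ω}).filter (fun e : {x // x ∈ Ω} => (e : G)⁻¹ * xw j ∈ Afin)) := by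
    rw [mem_filter]
    rw [← hAfin]
    simp
  rw [h1]
  have h2 : (((χ T : {y // y ∈ Y}) : {x // x ∈ Ω}) ∈
      (univ : Finset {x // x ∈ Ω}).filter (fun e : {x // x ∈ Ω} => (e : G)⁻¹ * xw j ∈ Afin)) ↔
      (((χ T : {y // y ∈ Y}) : {x // x ∈ Ω}) ∈ Jset j) := by
    rw [← hxw2 j, mem_inter]
    simp [hmemY]
  rw [h2, hJset]
  simp only [mem_image, mem_filter, mem_univ, true_and]
  constructor
  · rintro ⟨T', hj', heq⟩
    have : χ T' = χ T := Subtype.coe_injective heq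
    rwa [← χ.injective this]
  · intro hj
    exact ⟨T, hj, rfl⟩

lemma no_shatter_right {G : Type*} [Group G] [DecidableEq G] {A : Set G} {d : ℕ}
    (hnip : IsNIPSet A d) (Ω : Finset G) (Afin : Finset G) (hAfin : (Afin : Set G) = A)
    (X : Finset G) (Y : Finset {x // x ∈ Ω}) (hY : #Y = 2^d) :
    ¬ (X.image (fun x => (univ : Finset {x // x ∈ Ω}).filter
        (fun e : {x // x ∈ Ω} => x * (e : G)⁻¹ ∈ Afin))).Shatters Y := by
  intro hshat
  obtain ⟨Y', hY'sub, hY'card⟩ :=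
    exists_subset_card_eq (show d ≤ #Y by rw [hY]; exact Nat.le_of_lt Nat.lt_two_pow_self)
  have hshat' := hshat.mono_right hY'sub
  have hcard : Fintype.card (Fin d) = Fintype.card {y // y ∈ Y'} := by
    rw [Fintype.card_fin, Fintype.card_coe, hY'card]
  set χ : Fin d ≃ {y // y ∈ Y'} := Fintype.equivOfCardEq hcard with hχ
  set Jset : Finset (Fin d) → Finset {x // x ∈ Ω} := fun T =>
    T.image (fun i => ((χ i : {y // y ∈ Y'}) : {x // x ∈ Ω})) with hJset
  have hJsub : ∀ T, Jset T ⊆ Y' := by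
    intro T e he
    rw [hJset] at he
    obtain ⟨i, _, rfl⟩ := mem_image.mp he
    exact (χ i).2
  have hx : ∀ T : Finset (Fin d), ∃ x, x ∈ X ∧
      Y' ∩ ((univ : Finset {x // x ∈ Ω}).filter (fun e : {x // x ∈ Ω} => x * (e : G)⁻¹ ∈ Afin)) = Jset T := by
    intro T
    obtain ⟨u, hu, hint⟩ := hshat' (hJsub T)
    obtain ⟨x, hxX, rfl⟩ := mem_image.mp hu
    exact ⟨x, hxX, hint⟩
  choose xw hxw1 hxw2 using hx
  apply hnip
  refine ⟨fun i => (((χ i : {y // y ∈ Y'}) : {x // x ∈ Ω}) : G)⁻¹, fun T => xw T, ?_⟩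
  intro T i
  have hmemY : ((χ i : {y // y ∈ Y'}) : {x // x ∈ Ω}) ∈ Y' := (χ i).2
  have h1 : (xw T * (((χ i : {y // y ∈ Y'}) : {x // x ∈ Ω}) : G)⁻¹ ∈ A) ↔
      (((χ i : {y // y ∈ Y'}) : {x // x ∈ Ω}) ∈
        (univ : Finset {x // x ∈ Ω}).filter (fun e : {x // x ∈ Ω} => xw T * (e : G)⁻¹ ∈ Afin)) := by
    rw [mem_filter]
    rw [← hAfin]
    simp
  rw [h1]
  have h2 : (((χ i : {y // y ∈ Y'}) : {x // x ∈ Ω}) ∈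
      (univ : Finset {x // x ∈ Ω}).filter (fun e : {x // x ∈ Ω} => xw T * (e : G)⁻¹ ∈ Afin)) ↔
      (((χ i : {y // y ∈ Y'}) : {x // x ∈ Ω}) ∈ Jset T) := by
    rw [← hxw2 T, mem_inter]
    simp [hmemY]
  rw [h2, hJset]
  simp only [mem_image]
  constructor
  · rintro ⟨i', hi', heq⟩
    have : χ i' = χ i := Subtype.coe_injective heq
    rwa [← χ.injective this]
  · intro hi
    exact ⟨i, hi, rfl⟩

end AuxNIP

section Main
open Finset
open scoped Pointwise

/-- **NIP sets of small tripling are essentially approximate groups.**  For every `d ≥ 1`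
there are constants `C(d), c(d) > 0` such that if `A` is a nonempty finite `d`-NIP subset
of a group `G` with `|A³| ≤ k|A|` (`k ≥ 1` real), then there are `E, F ⊆ A^{±3}` of size at
most `C(d)·k^{c(d)}` with `A^{±2} ⊆ EA ∩ AF`; in particular `(A^{±1})²` is covered by at
most `C(d)·k^{c(d)}` left translates of `A^{±1}`, so `A^{±1}` is an `m`-approximate group
for some `m ≤ C(d)·k^{c(d)}`. -/
theorem nip_small_tripling_approx_group :
    ∀ d : ℕ, 1 ≤ d → ∃ C c : ℝ, 0 < C ∧ 0 < c ∧
      ∀ (G : Type) (_ : Group G) (A : Set G) (k : ℝ), 1 ≤ k → A.Nonempty → A.Finite →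
        IsNIPSet A d → ((A * A * A).ncard : ℝ) ≤ k * A.ncard →
        (∃ E F : Finset G, (E : Set G) ⊆ pmPow A 3 ∧ (F : Set G) ⊆ pmPow A 3 ∧
          (E.card : ℝ) ≤ C * k ^ c ∧ (F.card : ℝ) ≤ C * k ^ c ∧
          pmPow A 2 ⊆ ((E : Set G) * A) ∩ (A * (F : Set G))) ∧
        (∃ T : Finset G, (T.card : ℝ) ≤ C * k ^ c ∧
          pmPow A 1 * pmPow A 1 ⊆ (T : Set G) * pmPow A 1) ∧
        ∃ m : ℕ, (m : ℝ) ≤ C * k ^ c ∧ IsApproximateGroup (pmPow A 1) m := by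
  intro d hd
  refine ⟨2^(12 * 2^d + 24), 9, by positivity, by norm_num, ?_⟩
  intro G _ A k hk hAne hAfinite hnip htrip
  classical
  set D := 2^d with hD
  have hD1 : 1 ≤ D := Nat.one_le_two_pow
  set Afin := hAfinite.toFinset with hAfin_def
  have hAfin : (Afin : Set G) = A := hAfinite.coe_toFinset
  have hAne' : Afin.Nonempty := by rw [← Finset.coe_nonempty, hAfin]; exact hAne
  have hAcard1 : 1 ≤ #Afin := card_pos.mpr hAne'
  set B := Afin ∪ Afin⁻¹ with hB
  set Ω : Finset G := B^3 ∪ {1} with hΩ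
  set X : Finset G := B^2 ∪ {1} with hX
  have hBco : (B : Set G) = A ∪ A⁻¹ := by
    rw [hB, coe_union, coe_inv, hAfin]
  have hΩco : (Ω : Set G) = pmPow A 3 := by
    rw [hΩ, pmPow, coe_union, coe_pow, hBco, coe_singleton]
  have hXco : (X : Set G) = pmPow A 2 := by
    rw [hX, pmPow, coe_union, coe_pow, hBco, coe_singleton]
  -- symmetric
  have hBsymm : B⁻¹ = B := by
    apply coe_injective
    rw [coe_inv, hBco, Set.union_inv, inv_inv, Set.union_comm]
  have hBB3 : ∀ x ∈ B, x ∈ B^3 := by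
    intro x hx
    have hxinv : x⁻¹ ∈ B := by rw [← hBsymm]; exact inv_mem_inv hx
    have : x = x * x⁻¹ * x := by group
    rw [this, show B^3 = B*B*B from by rw [pow_succ, pow_succ, pow_one]]
    exact mul_mem_mul (mul_mem_mul hx hxinv) hx
  -- tripling
  have hA3 : (#(Afin*Afin*Afin) : ℝ) ≤ k * #Afin := by
    have h1 : (A*A*A).ncard = #(Afin*Afin*Afin) := by
      rw [← hAfin, ← coe_mul, ← coe_mul, Set.ncard_coe_finset]
    have h2 : A.ncard = #Afin := by rw [← hAfin, Set.ncard_coe_finset]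
    rw [h1, h2] at htrip
    exact htrip
  have hB3 := tripling_B3 Afin k hA3
  have hΩcard : (#Ω : ℝ) ≤ 8*k^3*#Afin + 1 := by
    calc (#Ω : ℝ) ≤ (#(B^3) : ℝ) + (#({1} : Finset G) : ℝ) := by
          exact_mod_cast card_union_le _ _
      _ ≤ 8*k^3*#Afin + 1 := by
          rw [card_singleton]
          push_cast
          linarith [hB3]
  set t := ⌈(8:ℝ)*k^3⌉₊ + 1 with ht_def
  have ht1 : 1 ≤ t := Nat.le_add_left 1 _
  have hk3 : (1:ℝ) ≤ k^3 := one_le_pow₀ hk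
  have htb : (t:ℝ) ≤ 10*k^3 := by
    have h1 : (⌈(8:ℝ)*k^3⌉₊ : ℝ) < 8*k^3 + 1 := Nat.ceil_lt_add_one (by positivity)
    rw [ht_def]
    push_cast
    linarith
  have hΩle : #Ω ≤ t * #Afin := by
    have : (#Ω : ℝ) ≤ (t : ℝ) * #Afin := by
      have h1 : (8:ℝ)*k^3 ≤ (⌈(8:ℝ)*k^3⌉₊ : ℝ) := Nat.le_ceil _
      have h2 : (1:ℝ) ≤ (#Afin : ℝ) := by exact_mod_cast hAcard1
      rw [ht_def]
      push_cast
      nlinarith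
    exact_mod_cast this
  -- subtype
  have h1Ω : (1:G) ∈ Ω := mem_union_right _ (mem_singleton_self 1)
  haveI : Nonempty {x // x ∈ Ω} := ⟨⟨1, h1Ω⟩⟩
  have hcardΩ : Fintype.card {x // x ∈ Ω} = #Ω := Fintype.card_coe Ω
  -- memberships
  have hmulL : ∀ x ∈ X, ∀ a ∈ Afin, x * a⁻¹ ∈ Ω := by
    intro x hx a ha
    have hainv : a⁻¹ ∈ B := by rw [← hBsymm]; exact inv_mem_inv (mem_union_left _ ha)
    rw [hX, mem_union] at hx
    rcases hx with hx | hx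
    · apply mem_union_left
      rw [show B^3 = B^2*B from by rw [pow_succ]]
      exact mul_mem_mul hx hainv
    · rw [mem_singleton] at hx
      subst hx
      rw [one_mul]
      exact mem_union_left _ (hBB3 _ hainv)
  have hmulR : ∀ x ∈ X, ∀ a ∈ Afin, a⁻¹ * x ∈ Ω := by
    intro x hx a ha
    have hainv : a⁻¹ ∈ B := by rw [← hBsymm]; exact inv_mem_inv (mem_union_left _ ha)
    rw [hX, mem_union] at hx
    rcases hx with hx | hx
    · apply mem_union_left
      rw [show B^3 = B*B^2 from by rw [← pow_succ']]
      exact mul_mem_mul hainv hx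
    · rw [mem_singleton] at hx
      subst hx
      rw [mul_one]
      exact mem_union_left _ (hBB3 _ hainv)
  -- the families
  set FL : Finset (Finset {x // x ∈ Ω}) := X.image (fun x =>
    (univ : Finset {x // x ∈ Ω}).filter (fun e : {x // x ∈ Ω} => (e : G)⁻¹ * x ∈ Afin))
    with hFL
  set FR : Finset (Finset {x // x ∈ Ω}) := X.image (fun x =>
    (univ : Finset {x // x ∈ Ω}).filter (fun e : {x // x ∈ Ω} => x * (e : G)⁻¹ ∈ Afin))
    with hFR
  -- size of each member
  have hsizeL : ∀ x ∈ X, #((univ : Finset {x // x ∈ Ω}).filter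
      (fun e : {x // x ∈ Ω} => (e : G)⁻¹ * x ∈ Afin)) = #Afin := by
    intro x hx
    apply Finset.card_nbij' (i := fun e : {x // x ∈ Ω} => (e : G)⁻¹ * x)
      (j := fun a : G => if h : x * a⁻¹ ∈ Ω then (⟨x * a⁻¹, h⟩ : {x // x ∈ Ω}) else ⟨1, h1Ω⟩)
    · intro e he
      exact (mem_filter.mp he).2
    · intro a ha
      simp only [mem_coe] at ha
      dsimp only; rw [dif_pos (hmulL x hx a ha)]
      simp only [mem_coe, mem_filter, mem_univ, true_and]
      have : (x * a⁻¹)⁻¹ * x = a := by group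
      rw [this]
      exact ha
    · intro e he
      simp only [mem_coe, mem_filter, mem_univ, true_and] at he
      have hee : x * ((e : G)⁻¹ * x)⁻¹ ∈ Ω := by
        have : x * ((e : G)⁻¹ * x)⁻¹ = (e : G) := by group
        rw [this]
        exact e.2
      dsimp only; rw [dif_pos hee]
      apply Subtype.ext
      simp only
      group
    · intro a ha
      simp only [mem_coe] at ha
      dsimp only; rw [dif_pos (hmulL x hx a ha)]
      simp only
      group
  have hsizeR : ∀ x ∈ X, #((univ : Finset {x // x ∈ Ω}).filter
      (fun e : {x // x ∈ Ω} => x * (e : G)⁻¹ ∈ Afin)) = #Afin := by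
    intro x hx
    apply Finset.card_nbij' (i := fun e : {x // x ∈ Ω} => x * (e : G)⁻¹)
      (j := fun a : G => if h : a⁻¹ * x ∈ Ω then (⟨a⁻¹ * x, h⟩ : {x // x ∈ Ω}) else ⟨1, h1Ω⟩)
    · intro e he
      exact (mem_filter.mp he).2
    · intro a ha
      simp only [mem_coe] at ha
      dsimp only; rw [dif_pos (hmulR x hx a ha)]
      simp only [mem_coe, mem_filter, mem_univ, true_and]
      have : x * (a⁻¹ * x)⁻¹ = a := by group
      rw [this]
      exact ha
    · intro e he
      simp only [mem_coe, mem_filter, mem_univ, true_and] at he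
      have hee : (x * (e : G)⁻¹)⁻¹ * x ∈ Ω := by
        have : (x * (e : G)⁻¹)⁻¹ * x = (e : G) := by group
        rw [this]
        exact e.2
      dsimp only; rw [dif_pos hee]
      apply Subtype.ext
      simp only
      group
    · intro a ha
      simp only [mem_coe] at ha
      dsimp only; rw [dif_pos (hmulR x hx a ha)]
      simp only
      group
  have hsizeL' : ∀ S ∈ FL, Fintype.card {x // x ∈ Ω} ≤ t * #S := by
    intro S hS
    obtain ⟨x, hx, rfl⟩ := mem_image.mp hS
    rw [hsizeL x hx, hcardΩ]
    exact hΩle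
  have hsizeR' : ∀ S ∈ FR, Fintype.card {x // x ∈ Ω} ≤ t * #S := by
    intro S hS
    obtain ⟨x, hx, rfl⟩ := mem_image.mp hS
    rw [hsizeR x hx, hcardΩ]
    exact hΩle
  -- nets
  obtain ⟨NetL, hNetLcard, hNetLhit⟩ := exists_net FL D t hD1 ht1 hsizeL'
    (fun Y hY => no_shatter_left hnip Ω Afin hAfin X Y (by rw [hY, hD]))
  obtain ⟨NetR, hNetRcard, hNetRhit⟩ := exists_net FR D t hD1 ht1 hsizeR'
    (fun Y hY => no_shatter_right hnip Ω Afin hAfin X Y (by rw [hY, hD]))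
  set E : Finset G := NetL.image Subtype.val with hE
  set Fs : Finset G := NetR.image Subtype.val with hFs
  -- bound on net sizes, in ℝ
  have hkc : k ^ (9:ℝ) = k^(9:ℕ) := by
    rw [show (9:ℝ) = ((9:ℕ):ℝ) by norm_num, Real.rpow_natCast]
  have hk9 : (1:ℝ) ≤ k^(9:ℕ) := one_le_pow₀ hk
  have hCpos : (0:ℝ) < 2^(12*D+24) := by positivity
  have hMreal : ((2^(6*D)*t*(2*(2^(6*D)*t)*t) : ℕ) : ℝ) + 1 ≤ 2^(12 * 2^d + 24) * k ^ (9:ℝ) := by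
    rw [hkc]
    have hx2 : ((2:ℝ)^(6*D))^2 = 2^(12*D) := by
      rw [← pow_mul]; congr 1; ring
    have ht3 : (t:ℝ)^3 ≤ 1000 * k^(9:ℕ) := by
      calc (t:ℝ)^3 ≤ (10*k^3)^3 := by
            apply pow_le_pow_left₀ (by positivity) htb
        _ = 1000 * k^(9:ℕ) := by ring
    have hM : ((2^(6*D)*t*(2*(2^(6*D)*t)*t) : ℕ) : ℝ) = 2 * ((2:ℝ)^(6*D))^2 * (t:ℝ)^3 := by
      push_cast
      ring
    rw [hM, hx2]
    have h2D : (0:ℝ) < 2^(12*D) := by positivity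
    have hX1 : (1:ℝ) ≤ 2^(12*D) := one_le_pow₀ (by norm_num)
    have hfin : 2 * (2:ℝ)^(12*D) * (1000 * k^(9:ℕ)) + k^(9:ℕ) ≤ 2^(12*D+24) * k^(9:ℕ) := by
      rw [pow_add]
      have h24 : (2:ℝ)^(24:ℕ) = 16777216 := by norm_num
      rw [h24]
      nlinarith [hX1, hk9]
    have hstep : 2 * (2:ℝ)^(12*D) * (t:ℝ)^3 ≤ 2 * 2^(12*D) * (1000*k^(9:ℕ)) :=
      mul_le_mul_of_nonneg_left ht3 (by positivity)
    have hDd : 12*D+24 = 12 * 2^d + 24 := by rw [hD]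
    rw [← hDd]
    linarith
  have hEcard : (#E : ℝ) ≤ 2^(12 * 2^d + 24) * k ^ (9:ℝ) := by
    have h0 : #E ≤ 2^(6*D)*t*(2*(2^(6*D)*t)*t) := le_trans (card_image_le (s := NetL) (f := Subtype.val)) hNetLcard
    have h1 : (#E : ℝ) ≤ ((2^(6*D)*t*(2*(2^(6*D)*t)*t) : ℕ) : ℝ) := by exact_mod_cast h0
    linarith
  have hFcard : (#Fs : ℝ) ≤ 2^(12 * 2^d + 24) * k ^ (9:ℝ) := by
    have h0 : #Fs ≤ 2^(6*D)*t*(2*(2^(6*D)*t)*t) := le_trans (card_image_le (s := NetR) (f := Subtype.val)) hNetRcard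
    have h1 : (#Fs : ℝ) ≤ ((2^(6*D)*t*(2*(2^(6*D)*t)*t) : ℕ) : ℝ) := by exact_mod_cast h0
    linarith
  -- net coverage
  have hcovL : pmPow A 2 ⊆ (E : Set G) * A := by
    intro z hz
    have hzX : z ∈ X := by rw [← mem_coe, hXco]; exact hz
    have hSx : ((univ : Finset {x // x ∈ Ω}).filter
        (fun e : {x // x ∈ Ω} => (e : G)⁻¹ * z ∈ Afin)) ∈ FL := mem_image_of_mem _ hzX
    obtain ⟨e, he⟩ := hNetLhit _ hSx
    rw [mem_inter] at he
    have he1 := (mem_filter.mp he.1).2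
    refine ⟨(e : G), ?_, (e : G)⁻¹ * z, ?_, by group⟩
    · exact mem_coe.mpr (mem_image_of_mem Subtype.val he.2)
    · rw [← hAfin]; exact he1
  have hcovR : pmPow A 2 ⊆ A * (Fs : Set G) := by
    intro z hz
    have hzX : z ∈ X := by rw [← mem_coe, hXco]; exact hz
    have hSx : ((univ : Finset {x // x ∈ Ω}).filter
        (fun e : {x // x ∈ Ω} => z * (e : G)⁻¹ ∈ Afin)) ∈ FR := mem_image_of_mem _ hzX
    obtain ⟨e, he⟩ := hNetRhit _ hSx
    rw [mem_inter] at he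
    have he1 := (mem_filter.mp he.1).2
    refine ⟨z * (e : G)⁻¹, ?_, (e : G), ?_, by group⟩
    · rw [← hAfin]; exact he1
    · exact mem_coe.mpr (mem_image_of_mem Subtype.val he.2)
  -- subsets of pmPow A 3
  have hEsub : (E : Set G) ⊆ pmPow A 3 := by
    intro z hz
    rw [← hΩco]
    obtain ⟨e, _, rfl⟩ := mem_image.mp (mem_coe.mp hz)
    exact mem_coe.mpr e.2
  have hFsub : (Fs : Set G) ⊆ pmPow A 3 := by
    intro z hz
    rw [← hΩco]
    obtain ⟨e, _, rfl⟩ := mem_image.mp (mem_coe.mp hz)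
    exact mem_coe.mpr e.2
  -- T and the approximate group
  set T : Finset G := E ∪ {1} with hT
  have hTcard : (#T : ℝ) ≤ 2^(12 * 2^d + 24) * k ^ (9:ℝ) := by
    have h1 : #T ≤ #E + 1 := (card_union_le _ _).trans (by rw [card_singleton])
    have h2 : (#T : ℝ) ≤ (#E : ℝ) + 1 := by exact_mod_cast h1
    have h3 : (#E : ℝ) + 1 ≤ ((2^(6*D)*t*(2*(2^(6*D)*t)*t) : ℕ) : ℝ) + 1 := by
      have h0 : #E ≤ 2^(6*D)*t*(2*(2^(6*D)*t)*t) := le_trans (card_image_le (s := NetL) (f := Subtype.val)) hNetLcard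
      have : (#E : ℝ) ≤ ((2^(6*D)*t*(2*(2^(6*D)*t)*t) : ℕ) : ℝ) := by exact_mod_cast h0
      linarith
    linarith
  have hAP : A ⊆ pmPow A 1 := by
    intro a ha
    exact Or.inl (by rw [pow_one]; exact Or.inl ha)
  have h1T : (1:G) ∈ (T : Set G) := by
    rw [hT]
    exact mem_coe.mpr (mem_union_right _ (mem_singleton_self 1))
  have hET : (E : Set G) ⊆ (T : Set G) := by
    rw [hT]
    exact_mod_cast coe_subset.mpr subset_union_left
  have hTcov : pmPow A 1 * pmPow A 1 ⊆ (T : Set G) * pmPow A 1 := by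
    rintro z ⟨p, hp, q, hq, rfl⟩
    have hone : ∀ w ∈ pmPow A 1, w ∈ (T : Set G) * pmPow A 1 := by
      intro w hw
      exact ⟨1, h1T, w, hw, one_mul w⟩
    rcases hp with hp | hp
    · rcases hq with hq | hq
      · rw [pow_one] at hp hq
        have hpq : p * q ∈ pmPow A 2 := Or.inl (by rw [sq]; exact Set.mul_mem_mul hp hq)
        obtain ⟨e, heE, a, haA, heq⟩ := hcovL hpq
        exact ⟨e, hET heE, a, hAP haA, heq⟩
      · rw [Set.mem_singleton_iff] at hq
        subst hq
        exact ⟨1, h1T, p, Or.inl hp, by group⟩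
    · rw [Set.mem_singleton_iff] at hp
      subst hp
      exact ⟨1, h1T, q, hq, by group⟩
  have hPsymm : (pmPow A 1)⁻¹ = pmPow A 1 := by
    rw [pmPow, pow_one, Set.union_inv, Set.union_inv, inv_inv]
    rw [Set.inv_singleton, inv_one, Set.union_comm A A⁻¹]
  refine ⟨⟨E, Fs, hEsub, hFsub, hEcard, hFcard, Set.subset_inter hcovL hcovR⟩,
    ⟨T, hTcard, hTcov⟩, #T, hTcard, ?_, hPsymm, T, le_rfl, hTcov⟩
  exact Or.inr rfl

end Main
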